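/- Let k be an algebraically closed complete non-Archimedean valued field, r ∈ |k*|, and f a power series convergent on the closed disc D(r). The number of zeros of f in D(r), counted with multiplicity, is finite and equals the largest index N such that |a_N| r^N = sup_n |aₙ| rⁿ. -/

import Mathlib

open Filter Polynomial

namespace NewtonZeros

set_option linter.unusedSectionVars false
set_option linter.unusedVariables false
set_option maxHeartbeats 1000000

variable {k : Type*} [NontriviallyNormedField k] [IsUltrametricDist k] {r : ℝ}

lemma norm_add_eq_left {x y : k} (h : ‖y‖ < ‖x‖) : ‖x + y‖ = ‖x‖ := by
  rw [IsUltrametricDist.norm_add_eq_max_of_norm_ne_norm h.ne']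
  exact max_eq_left h.le


def NewtonAt (r : ℝ) (Q : k[X]) (ν : ℕ) : Prop :=
  Q.coeff ν ≠ 0 ∧ (∀ j, ‖Q.coeff j‖ * r ^ j ≤ ‖Q.coeff ν‖ * r ^ ν) ∧
    ∀ j, ν < j → ‖Q.coeff j‖ * r ^ j < ‖Q.coeff ν‖ * r ^ ν

lemma norm_sum_lt_of_forall_lt {ι : Type*} {s : Finset ι} {f : ι → k} {C : ℝ}
    (hC : 0 < C) (h : ∀ i ∈ s, ‖f i‖ < C) : ‖∑ i ∈ s, f i‖ < C := by
  rcases s.eq_empty_or_nonempty with he | hne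
  · rw [he]; simpa using hC
  · exact lt_of_le_of_lt (hne.norm_sum_le_sup'_norm _) ((Finset.sup'_lt_iff hne).mpr h)

lemma newtonAt_X_sub_C_of_le (hr : 0 < r) {w : k} (hw : ‖w‖ ≤ r) :
    NewtonAt r (X - C w) 1 := by
  have h1 : (X - C w).coeff 1 = 1 := by
    simp [Polynomial.coeff_sub, Polynomial.coeff_X_one, Polynomial.coeff_C]
  have h0 : (X - C w).coeff 0 = -w := by
    simp [Polynomial.coeff_sub, Polynomial.coeff_X_zero, Polynomial.coeff_C]
  refine ⟨by rw [h1]; exact one_ne_zero, ?_, ?_⟩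
  · intro j
    match j with
    | 0 => rw [h0, h1]; simpa using hw
    | 1 => exact le_rfl
    | (j+2) =>
      have : (X - C w).coeff (j+2) = 0 := by
        rw [Polynomial.coeff_sub, Polynomial.coeff_X, Polynomial.coeff_C]
        simp
      rw [this, h1]
      simp [pow_pos hr]
      positivity
  · intro j hj
    match j, hj with
    | (j+2), _ =>
      have : (X - C w).coeff (j+2) = 0 := by
        rw [Polynomial.coeff_sub, Polynomial.coeff_X, Polynomial.coeff_C]
        simp
      rw [this, h1]
      simp
      positivity

lemma newtonAt_X_sub_C_of_gt (hr : 0 < r) {w : k} (hw : r < ‖w‖) :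
    NewtonAt r (X - C w) 0 := by
  have h1 : (X - C w).coeff 1 = 1 := by
    simp [Polynomial.coeff_sub, Polynomial.coeff_X_one, Polynomial.coeff_C]
  have h0 : (X - C w).coeff 0 = -w := by
    simp [Polynomial.coeff_sub, Polynomial.coeff_X_zero, Polynomial.coeff_C]
  have hw0 : ‖(X - C w).coeff 0‖ * r ^ 0 = ‖w‖ := by rw [h0]; simp
  have hwpos : (0:ℝ) < ‖w‖ := hr.trans hw
  have hstrict : ∀ j, 0 < j → ‖(X - C w).coeff j‖ * r ^ j < ‖(X - C w).coeff 0‖ * r ^ 0 := by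
    intro j hj
    rw [hw0]
    match j, hj with
    | 1, _ => rw [h1]; simpa using hw
    | (j+2), _ =>
      have : (X - C w).coeff (j+2) = 0 := by
        rw [Polynomial.coeff_sub, Polynomial.coeff_X, Polynomial.coeff_C]
        simp
      rw [this]
      simpa using hwpos
  refine ⟨by rw [h0]; simpa using (norm_pos_iff.mp hwpos), ?_, hstrict⟩
  intro j
  match j with
  | 0 => exact le_rfl
  | (j+1) => exact (hstrict (j+1) (Nat.succ_pos j)).le

lemma newtonAt_C (hr : 0 < r) {c : k} (hc : c ≠ 0) : NewtonAt r (C c) 0 := by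
  have h0 : (C c : k[X]).coeff 0 = c := Polynomial.coeff_C_zero
  have hpos : (0:ℝ) < ‖c‖ := norm_pos_iff.mpr hc
  have hstrict : ∀ j, 0 < j → ‖(C c : k[X]).coeff j‖ * r ^ j < ‖(C c : k[X]).coeff 0‖ * r ^ 0 := by
    intro j hj
    rw [h0, Polynomial.coeff_C, if_neg (Nat.pos_iff_ne_zero.mp hj)]
    simpa using hpos
  refine ⟨by rw [h0]; exact hc, ?_, hstrict⟩
  intro j
  match j with
  | 0 => exact le_rfl
  | (j+1) => exact (hstrict (j+1) (Nat.succ_pos j)).le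


lemma NewtonAt.unique (hr : 0 < r) {Q : k[X]} {ν ν' : ℕ}
    (h : NewtonAt r Q ν) (h' : NewtonAt r Q ν') : ν = ν' := by
  by_contra hne
  rcases Nat.lt_or_ge ν ν' with hlt | hge
  · exact absurd (h'.2.1 ν) (not_le.mpr (h.2.2 ν' hlt))
  · have hlt : ν' < ν := lt_of_le_of_ne hge (Ne.symm hne)
    exact absurd (h.2.1 ν') (not_le.mpr (h'.2.2 ν hlt))


lemma NewtonAt.mul (hr : 0 < r) {Q Q' : k[X]} {ν ν' : ℕ}
    (h : NewtonAt r Q ν) (h' : NewtonAt r Q' ν') :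
    NewtonAt r (Q * Q') (ν + ν') ∧
      ‖(Q * Q').coeff (ν + ν')‖ = ‖Q.coeff ν‖ * ‖Q'.coeff ν'‖ := by
  set μ := ‖Q.coeff ν‖ * r ^ ν with hμ
  set μ' := ‖Q'.coeff ν'‖ * r ^ ν' with hμ'
  have hμpos : 0 < μ := mul_pos (norm_pos_iff.mpr h.1) (pow_pos hr ν)
  have hμpos' : 0 < μ' := mul_pos (norm_pos_iff.mpr h'.1) (pow_pos hr ν')
  have key : ∀ (m : ℕ) (p : ℕ × ℕ), p ∈ Finset.HasAntidiagonal.antidiagonal m →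
      ‖Q.coeff p.1 * Q'.coeff p.2‖ * r ^ m ≤ μ * μ' := by
    intro m p hp
    rw [Finset.HasAntidiagonal.mem_antidiagonal] at hp
    rw [← hp, pow_add, norm_mul]
    calc ‖Q.coeff p.1‖ * ‖Q'.coeff p.2‖ * (r ^ p.1 * r ^ p.2)
        = (‖Q.coeff p.1‖ * r ^ p.1) * (‖Q'.coeff p.2‖ * r ^ p.2) := by ring
      _ ≤ μ * μ' := by
          have := h.2.1 p.1
          have := h'.2.1 p.2
          have h1 : (0:ℝ) ≤ ‖Q.coeff p.1‖ * r ^ p.1 := by positivity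
          have h2 : (0:ℝ) ≤ ‖Q'.coeff p.2‖ * r ^ p.2 := by positivity
          nlinarith
  have keystrict : ∀ (m : ℕ) (p : ℕ × ℕ), p ∈ Finset.HasAntidiagonal.antidiagonal m →
      (ν < p.1 ∨ ν' < p.2) → ‖Q.coeff p.1 * Q'.coeff p.2‖ * r ^ m < μ * μ' := by
    intro m p hp hcase
    rw [Finset.HasAntidiagonal.mem_antidiagonal] at hp
    rw [← hp, pow_add, norm_mul]
    have e : ‖Q.coeff p.1‖ * ‖Q'.coeff p.2‖ * (r ^ p.1 * r ^ p.2)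
        = (‖Q.coeff p.1‖ * r ^ p.1) * (‖Q'.coeff p.2‖ * r ^ p.2) := by ring
    rw [e]
    have h1 : (0:ℝ) ≤ ‖Q.coeff p.1‖ * r ^ p.1 := by positivity
    have h2 : (0:ℝ) ≤ ‖Q'.coeff p.2‖ * r ^ p.2 := by positivity
    rcases hcase with hc | hc
    · have hs := h.2.2 p.1 hc
      have hw := h'.2.1 p.2
      nlinarith
    · have hs := h'.2.2 p.2 hc
      have hw := h.2.1 p.1
      nlinarith
  -- equality at ν + ν'
  have hmain : ‖Q.coeff ν * Q'.coeff ν'‖ * r ^ (ν + ν') = μ * μ' := by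
    rw [pow_add, norm_mul]; ring
  have hrest : ∀ p ∈ (Finset.HasAntidiagonal.antidiagonal (ν + ν')).erase (ν, ν'),
      ‖Q.coeff p.1 * Q'.coeff p.2‖ * r ^ (ν + ν') < μ * μ' := by
    intro p hp
    have hpne := Finset.ne_of_mem_erase hp
    have hpm := Finset.mem_of_mem_erase hp
    have hsum := Finset.HasAntidiagonal.mem_antidiagonal.mp hpm
    refine keystrict _ p hpm ?_
    rcases Nat.lt_or_ge ν p.1 with h1 | h1
    · exact Or.inl h1
    · rcases Nat.lt_or_ge ν' p.2 with h2 | h2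
      · exact Or.inr h2
      · exfalso; apply hpne
        have : p.1 = ν ∧ p.2 = ν' := by omega
        exact Prod.ext this.1 this.2
  have heq : ‖(Q * Q').coeff (ν + ν')‖ * r ^ (ν + ν') = μ * μ' := by
    rw [Polynomial.coeff_mul]
    rw [← Finset.add_sum_erase _ _ (show ((ν, ν') : ℕ × ℕ) ∈ Finset.HasAntidiagonal.antidiagonal (ν + ν') from Finset.HasAntidiagonal.mem_antidiagonal.mpr rfl)]
    set t := (Finset.HasAntidiagonal.antidiagonal (ν + ν')).erase (ν, ν') with ht
    have hrlt : ‖∑ p ∈ t, Q.coeff p.1 * Q'.coeff p.2‖ < ‖Q.coeff ν * Q'.coeff ν'‖ := by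
      rcases t.eq_empty_or_nonempty with he | hne
      · rw [he]
        simpa using norm_pos_iff.mpr (mul_ne_zero h.1 h'.1)
      · refine lt_of_le_of_lt (hne.norm_sum_le_sup'_norm _) ?_
        rw [Finset.sup'_lt_iff]
        intro p hp
        have := hrest p hp
        have h3 : (0:ℝ) < r ^ (ν + ν') := pow_pos hr _
        rw [← hmain] at this
        exact lt_of_mul_lt_mul_right this h3.le
    rw [norm_add_eq_left hrlt, hmain]
  have hcoeffeq : ‖(Q * Q').coeff (ν + ν')‖ = ‖Q.coeff ν‖ * ‖Q'.coeff ν'‖ := by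
    have h3 : (0:ℝ) < r ^ (ν + ν') := pow_pos hr _
    have : ‖(Q * Q').coeff (ν + ν')‖ * r ^ (ν + ν')
        = (‖Q.coeff ν‖ * ‖Q'.coeff ν'‖) * r ^ (ν + ν') := by
      rw [heq, pow_add]; ring
    exact mul_right_cancel₀ h3.ne' this
  have hne0 : (Q * Q').coeff (ν + ν') ≠ 0 := by
    rw [← norm_pos_iff, hcoeffeq]
    exact mul_pos (norm_pos_iff.mpr h.1) (norm_pos_iff.mpr h'.1)
  refine ⟨⟨hne0, ?_, ?_⟩, hcoeffeq⟩
  · intro j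
    rw [heq]
    rw [Polynomial.coeff_mul]
    have h3 : (0:ℝ) < r ^ j := pow_pos hr _
    have hb : ‖∑ p ∈ Finset.HasAntidiagonal.antidiagonal j, Q.coeff p.1 * Q'.coeff p.2‖ ≤ μ * μ' / r ^ j := by
      refine IsUltrametricDist.norm_sum_le_of_forall_le_of_nonneg (by positivity) ?_
      intro p hp
      rw [le_div_iff₀ h3]
      exact key j p hp
    calc ‖∑ p ∈ Finset.HasAntidiagonal.antidiagonal j, Q.coeff p.1 * Q'.coeff p.2‖ * r ^ j
        ≤ (μ * μ' / r ^ j) * r ^ j := by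
          exact mul_le_mul_of_nonneg_right hb h3.le
      _ = μ * μ' := by field_simp
  · intro j hj
    rw [heq, Polynomial.coeff_mul]
    have h3 : (0:ℝ) < r ^ j := pow_pos hr _
    have hstrict : ∀ p ∈ Finset.HasAntidiagonal.antidiagonal j,
        ‖Q.coeff p.1 * Q'.coeff p.2‖ < μ * μ' / r ^ j := by
      intro p hp
      rw [lt_div_iff₀ h3]
      refine keystrict j p hp ?_
      have := Finset.HasAntidiagonal.mem_antidiagonal.mp hp
      omega
    rcases (Finset.HasAntidiagonal.antidiagonal j).eq_empty_or_nonempty with he | hne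
    · rw [he]; simpa using mul_pos hμpos hμpos'
    · have := lt_of_le_of_lt (hne.norm_sum_le_sup'_norm _)
        ((Finset.sup'_lt_iff hne).mpr hstrict)
      calc ‖∑ p ∈ Finset.HasAntidiagonal.antidiagonal j, Q.coeff p.1 * Q'.coeff p.2‖ * r ^ j
          < (μ * μ' / r ^ j) * r ^ j := by
            exact mul_lt_mul_of_pos_right this h3
        _ = μ * μ' := by field_simp


lemma newtonAt_prod_in (hr : 0 < r) (S : Multiset k) (h : ∀ w ∈ S, ‖w‖ ≤ r) :
    NewtonAt r ((S.map fun w => X - C w).prod) (Multiset.card S) := by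
  induction S using Multiset.induction with
  | empty =>
    simp only [Multiset.map_zero, Multiset.prod_zero, Multiset.card_zero]
    have := newtonAt_C hr (one_ne_zero : (1:k) ≠ 0)
    rwa [map_one] at this
  | cons x S ih =>
    rw [Multiset.map_cons, Multiset.prod_cons, Multiset.card_cons]
    have hx := newtonAt_X_sub_C_of_le hr (h x (Multiset.mem_cons_self _ _))
    have hS := ih fun w hw => h w (Multiset.mem_cons_of_mem hw)
    have := (hx.mul hr hS).1
    simpa [add_comm] using this

lemma newtonAt_C_mul_prod_out (hr : 0 < r) {c : k} (hc : c ≠ 0)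
    (S : Multiset k) (h : ∀ w ∈ S, r < ‖w‖) :
    NewtonAt r (C c * (S.map fun w => X - C w).prod) 0 := by
  induction S using Multiset.induction with
  | empty => simpa using newtonAt_C hr hc
  | cons x S ih =>
    rw [Multiset.map_cons, Multiset.prod_cons]
    have hx := newtonAt_X_sub_C_of_gt hr (h x (Multiset.mem_cons_self _ _))
    have hS := ih fun w hw => h w (Multiset.mem_cons_of_mem hw)
    have := (hS.mul hr hx).1
    have e : C c * ((X - C x) * (S.map fun w => X - C w).prod)
        = (C c * (S.map fun w => X - C w).prod) * (X - C x) := by ring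
    rw [e]
    simpa using this

lemma NewtonAt.norm_eval_eq (hr : 0 < r) {Q : k[X]} (h : NewtonAt r Q 0)
    {z : k} (hz : ‖z‖ ≤ r) : ‖Q.eval z‖ = ‖Q.coeff 0‖ := by
  rw [Polynomial.eval_eq_sum_range, Finset.sum_range_succ']
  simp only [pow_zero, mul_one]
  rw [add_comm]
  apply norm_add_eq_left
  apply norm_sum_lt_of_forall_lt (norm_pos_iff.mpr h.1)
  intro i _
  have hb : ‖Q.coeff (i+1) * z ^ (i+1)‖ ≤ ‖Q.coeff (i+1)‖ * r ^ (i+1) := by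
    rw [norm_mul, norm_pow]
    gcongr
  refine hb.trans_lt ?_
  have := h.2.2 (i+1) (Nat.succ_pos i)
  simpa using this


lemma norm_multiset_prod (S : Multiset k) : ‖S.prod‖ = (S.map fun x => ‖x‖).prod := by
  induction S using Multiset.induction with
  | empty => simp
  | cons x S ih => simp [norm_mul, ih]

lemma multiset_exists_min {α : Type*} {S : Multiset α} (h : S ≠ 0) (f : α → ℝ) :
    ∃ w ∈ S, ∀ w' ∈ S, f w ≤ f w' := by
  induction S using Multiset.induction with
  | empty => exact absurd rfl h
  | cons x S ih =>
    rcases eq_or_ne S 0 with rfl | hS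
    · exact ⟨x, Multiset.mem_cons_self _ _, by simp⟩
    · obtain ⟨w, hw, hmin⟩ := ih hS
      rcases le_total (f x) (f w) with hle | hle
      · refine ⟨x, Multiset.mem_cons_self _ _, ?_⟩
        intro w' hw'
        rcases Multiset.mem_cons.mp hw' with rfl | hw'
        · exact le_rfl
        · exact hle.trans (hmin _ hw')
      · refine ⟨w, Multiset.mem_cons_of_mem hw, ?_⟩
        intro w' hw'
        rcases Multiset.mem_cons.mp hw' with rfl | hw'
        · exact hle
        · exact hmin _ hw'

lemma pow_card_le_prod {S : Multiset ℝ} {c : ℝ} (hc : 0 ≤ c) (h : ∀ x ∈ S, c ≤ x) :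
    c ^ (Multiset.card S) ≤ S.prod := by
  induction S using Multiset.induction with
  | empty => simp
  | cons x S ih =>
    simp only [Multiset.card_cons, Multiset.prod_cons, pow_succ]
    rw [mul_comm (c ^ _) c]
    have h1 : c ≤ x := h x (Multiset.mem_cons_self _ _)
    have h2 := ih fun y hy => h y (Multiset.mem_cons_of_mem hy)
    have : (0:ℝ) ≤ c ^ Multiset.card S := pow_nonneg hc _
    calc c * c ^ Multiset.card S ≤ x * c ^ Multiset.card S := by nlinarith
    _ ≤ x * S.prod := by nlinarith [hc.trans h1]


/-- truncation polynomial -/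
noncomputable def trunc (a : ℕ → k) (m : ℕ) : k[X] :=
  ∑ n ∈ Finset.range (m + 1), C (a n) * X ^ n

lemma trunc_coeff (a : ℕ → k) (m j : ℕ) :
    (trunc a m).coeff j = if j ≤ m then a j else 0 := by
  rw [trunc, Polynomial.finset_sum_coeff]
  simp only [Polynomial.coeff_C_mul, Polynomial.coeff_X_pow, mul_ite, mul_one, mul_zero]
  rw [Finset.sum_ite_eq (Finset.range (m+1)) j a]
  simp [Nat.lt_succ_iff]

lemma trunc_eval (a : ℕ → k) (m : ℕ) (z : k) :
    (trunc a m).eval z = ∑ n ∈ Finset.range (m + 1), a n * z ^ n := by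
  rw [trunc, Polynomial.eval_finset_sum]
  simp

section RootStep
variable [IsAlgClosed k]
variable {a : ℕ → k} {N : ℕ}

lemma trunc_newton (hr : 0 < r) (haN : a N ≠ 0)
    (hub : ∀ n, ‖a n‖ * r ^ n ≤ ‖a N‖ * r ^ N)
    (hstrict : ∀ n, N < n → ‖a n‖ * r ^ n < ‖a N‖ * r ^ N)
    {m : ℕ} (hm : N ≤ m) : NewtonAt r (trunc a m) N := by
  have hc : (trunc a m).coeff N = a N := by rw [trunc_coeff, if_pos hm]
  have hpos : (0:ℝ) < ‖a N‖ * r ^ N := by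
    have := norm_pos_iff.mpr haN
    positivity
  refine ⟨by rw [hc]; exact haN, ?_, ?_⟩
  · intro j
    rw [hc, trunc_coeff]
    split_ifs with hj
    · exact hub j
    · simpa using hpos.le
  · intro j hj
    rw [hc, trunc_coeff]
    split_ifs with hj'
    · exact hstrict j hj
    · simpa using hpos

lemma root_step (hr : 0 < r) (haN : a N ≠ 0) (hN1 : 1 ≤ N)
    (hub : ∀ n, ‖a n‖ * r ^ n ≤ ‖a N‖ * r ^ N)
    (hstrict : ∀ n, N < n → ‖a n‖ * r ^ n < ‖a N‖ * r ^ N)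
    {m : ℕ} (hm : N ≤ m) (z : k) (hz : ‖z‖ ≤ r) :
    ∃ w, ‖w‖ ≤ r ∧ (trunc a m).IsRoot w ∧
      ‖z - w‖ ^ N * ‖a N‖ ≤ ‖(trunc a m).eval z‖ := by
  classical
  obtain ⟨Q, hQ⟩ : ∃ q : k[X], q = trunc a m := ⟨_, rfl⟩
  rw [← hQ]
  have hQnewton : NewtonAt r Q N := by rw [hQ]; exact trunc_newton hr haN hub hstrict hm
  have hQne : Q ≠ 0 := fun h0 => hQnewton.1 (by rw [h0, Polynomial.coeff_zero])
  have hcard : Multiset.card Q.roots = Q.natDegree :=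
    Polynomial.splits_iff_card_roots.mp (IsAlgClosed.splits Q)
  have hfact := Polynomial.C_leadingCoeff_mul_prod_multiset_X_sub_C hcard
  obtain ⟨In, hIn⟩ : ∃ s, s = Q.roots.filter (fun w => ‖w‖ ≤ r) := ⟨_, rfl⟩
  obtain ⟨Out, hOut⟩ : ∃ s, s = Q.roots.filter (fun w => ¬ ‖w‖ ≤ r) := ⟨_, rfl⟩
  have hsplit : In + Out = Q.roots := by
    rw [hIn, hOut]; exact Multiset.filter_add_not _ _
  obtain ⟨Q₁, hQ₁⟩ : ∃ q : k[X], q = (In.map fun w => X - C w).prod := ⟨_, rfl⟩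
  obtain ⟨Q₂, hQ₂⟩ : ∃ q : k[X], q = C Q.leadingCoeff * (Out.map fun w => X - C w).prod :=
    ⟨_, rfl⟩
  have hQ12 : Q = Q₁ * Q₂ := by
    rw [hQ₁, hQ₂]
    conv_lhs => rw [← hfact, ← hsplit]
    rw [Multiset.map_add, Multiset.prod_add]
    ring
  have hlc : Q.leadingCoeff ≠ 0 := Polynomial.leadingCoeff_ne_zero.mpr hQne
  have h₁ : NewtonAt r Q₁ (Multiset.card In) := by
    rw [hQ₁]
    refine newtonAt_prod_in hr In fun w hw => ?_
    rw [hIn] at hw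
    exact (Multiset.mem_filter.mp hw).2
  have h₂ : NewtonAt r Q₂ 0 := by
    rw [hQ₂]
    refine newtonAt_C_mul_prod_out hr hlc Out fun w hw => ?_
    rw [hOut] at hw
    exact not_le.mp (Multiset.mem_filter.mp hw).2
  have hmul := h₁.mul hr h₂
  have hQn' : NewtonAt r Q (Multiset.card In + 0) := by rw [hQ12]; exact hmul.1
  have hcardN : Multiset.card In = N := by
    have := hQn'.unique hr hQnewton
    omega
  have hInne : In ≠ 0 := by
    intro h0
    rw [h0] at hcardN
    simp at hcardN
    omega
  obtain ⟨w, hwIn, hwmin⟩ := multiset_exists_min hInne (fun w => ‖z - w‖)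
  have hwIn' : w ∈ Q.roots.filter (fun w => ‖w‖ ≤ r) := by rw [← hIn]; exact hwIn
  have hwroot : Q.IsRoot w := ((Polynomial.mem_roots'.mp (Multiset.mem_filter.mp hwIn').1).2)
  have hwr : ‖w‖ ≤ r := (Multiset.mem_filter.mp hwIn').2
  refine ⟨w, hwr, hwroot, ?_⟩
  -- compute eval norms
  have hevQ₂ : ‖Q₂.eval z‖ = ‖Q₂.coeff 0‖ := h₂.norm_eval_eq hr hz
  have hevQ₁ : ‖Q₁.eval z‖ = (In.map fun w' => ‖z - w'‖).prod := by
    rw [hQ₁, Polynomial.eval_multiset_prod, Multiset.map_map, norm_multiset_prod,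
      Multiset.map_map]

    congr 1
    apply Multiset.map_congr rfl
    intro x _
    simp
  -- coefficient comparison : ‖Q₂.coeff 0‖ = ‖a N‖
  have hmonic₁ : Q₁.Monic := by
    rw [hQ₁]
    exact Polynomial.monic_multiset_prod_of_monic _ _ fun w _ => Polynomial.monic_X_sub_C w
  have hdeg₁ : Q₁.natDegree = N := by
    rw [hQ₁, Polynomial.natDegree_multiset_prod_X_sub_C_eq_card, hcardN]
  have hcoeff₁ : ‖Q₁.coeff (Multiset.card In)‖ = 1 := by
    rw [hcardN, ← hdeg₁, hmonic₁.coeff_natDegree, norm_one]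
  have hcoeffQ : ‖Q.coeff (Multiset.card In + 0)‖ = ‖a N‖ := by
    rw [hcardN]
    simp only [add_zero]
    rw [hQ, trunc_coeff, if_pos hm]
  have hQ₂0 : ‖Q₂.coeff 0‖ = ‖a N‖ := by
    have := hmul.2
    rw [← hQ12, hcoeffQ, hcoeff₁, one_mul] at this
    exact this.symm
  -- product lower bound
  have hprodge : ‖z - w‖ ^ N ≤ (In.map fun w' => ‖z - w'‖).prod := by
    have hcard' : Multiset.card (In.map fun w' => ‖z - w'‖) = N := by
      rw [Multiset.card_map, hcardN]
    rw [← hcard']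
    apply pow_card_le_prod (norm_nonneg _)
    intro x hx
    obtain ⟨w', hw', rfl⟩ := Multiset.mem_map.mp hx
    exact hwmin w' hw'
  calc ‖z - w‖ ^ N * ‖a N‖
      ≤ (In.map fun w' => ‖z - w'‖).prod * ‖a N‖ := by
        have : (0:ℝ) ≤ ‖a N‖ := norm_nonneg _
        exact mul_le_mul_of_nonneg_right hprodge this
    _ = ‖Q₁.eval z‖ * ‖Q₂.eval z‖ := by rw [hevQ₁, hevQ₂, hQ₂0]
    _ = ‖Q.eval z‖ := by rw [hQ12, Polynomial.eval_mul, norm_mul]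

end RootStep


section Series
variable [CompleteSpace k]

lemma summable_of_norm_le_tendsto {f : ℕ → k} {u : ℕ → ℝ}
    (hle : ∀ n, ‖f n‖ ≤ u n) (hu : Tendsto u atTop (nhds 0)) : Summable f := by
  apply NonarchimedeanAddGroup.summable_of_tendsto_cofinite_zero
  rw [Nat.cofinite_eq_atTop, tendsto_zero_iff_norm_tendsto_zero]
  exact squeeze_zero (fun n => norm_nonneg _) hle hu

variable {a : ℕ → k}

lemma summable_pow (hr : 0 < r) (ha : Tendsto (fun n => ‖a n‖ * r ^ n) atTop (nhds 0))
    {z : k} (hz : ‖z‖ ≤ r) : Summable (fun n => a n * z ^ n) := by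
  refine summable_of_norm_le_tendsto (fun n => ?_) ha
  rw [norm_mul, norm_pow]
  exact mul_le_mul_of_nonneg_left (pow_le_pow_left₀ (norm_nonneg z) hz n) (norm_nonneg _)

lemma tail_tendsto (ha : Tendsto (fun n => ‖a n‖ * r ^ n) atTop (nhds 0)) (i : ℕ) :
    Tendsto (fun j => ‖a (i + 1 + j)‖ * r ^ (i + 1 + j)) atTop (nhds 0) := by
  have h := (tendsto_add_atTop_iff_nat (f := fun n => ‖a n‖ * r ^ n) (i + 1)).mpr ha
  refine h.congr fun j => ?_
  rw [add_comm j (i+1)]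

noncomputable def bseq (a : ℕ → k) (w : k) (i : ℕ) : k := ∑' j, a (i + 1 + j) * w ^ j

lemma bseq_summable (hr : 0 < r) (ha : Tendsto (fun n => ‖a n‖ * r ^ n) atTop (nhds 0))
    {w : k} (hw : ‖w‖ ≤ r) (i : ℕ) : Summable (fun j => a (i + 1 + j) * w ^ j) := by
  refine summable_of_norm_le_tendsto (u := fun j => (‖a (i+1+j)‖ * r ^ (i+1+j)) * (r ^ (i+1))⁻¹)
    (fun j => ?_) (by simpa using (tail_tendsto ha i).mul_const ((r ^ (i+1))⁻¹))
  show ‖a (i+1+j) * w ^ j‖ ≤ ‖a (i+1+j)‖ * r ^ (i+1+j) * (r ^ (i+1))⁻¹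
  have h1 : ‖a (i+1+j)‖ * r ^ (i+1+j) * (r ^ (i+1))⁻¹ = ‖a (i+1+j)‖ * r ^ j := by
    rw [pow_add]
    field_simp
  rw [norm_mul, norm_pow, h1]
  exact mul_le_mul_of_nonneg_left (pow_le_pow_left₀ (norm_nonneg w) hw j) (norm_nonneg _)

lemma bseq_norm_le (hr : 0 < r) (ha : Tendsto (fun n => ‖a n‖ * r ^ n) atTop (nhds 0))
    {C : ℝ} (hC : 0 ≤ C) {w : k} (hw : ‖w‖ ≤ r) (i : ℕ)
    (h : ∀ n, i + 1 ≤ n → ‖a n‖ * r ^ n ≤ C) : ‖bseq a w i‖ * r ^ (i + 1) ≤ C := by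
  have hrp : (0:ℝ) < r ^ (i+1) := pow_pos hr _
  have each : ∀ j, ‖a (i + 1 + j) * w ^ j‖ ≤ C / r ^ (i + 1) := by
    intro j
    rw [le_div_iff₀ hrp]
    calc ‖a (i+1+j) * w ^ j‖ * r ^ (i+1)
        ≤ (‖a (i+1+j)‖ * r ^ j) * r ^ (i+1) := by
          rw [norm_mul, norm_pow]
          exact mul_le_mul_of_nonneg_right
            (mul_le_mul_of_nonneg_left (pow_le_pow_left₀ (norm_nonneg w) hw j)
              (norm_nonneg _)) hrp.le
      _ = ‖a (i+1+j)‖ * r ^ (i+1+j) := by rw [pow_add]; ring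
      _ ≤ C := h _ (by omega)
  have := IsUltrametricDist.norm_tsum_le_of_forall_le_of_nonneg (by positivity) each
  rw [← le_div_iff₀ hrp]
  exact this

lemma bseq_decay (hr : 0 < r) (ha : Tendsto (fun n => ‖a n‖ * r ^ n) atTop (nhds 0))
    {w : k} (hw : ‖w‖ ≤ r) :
    Tendsto (fun i => ‖bseq a w i‖ * r ^ i) atTop (nhds 0) := by
  rw [Metric.tendsto_atTop]
  intro ε hε
  have hεr : 0 < ε / 2 * r := by positivity
  obtain ⟨M, hM⟩ := (Metric.tendsto_atTop.mp ha) (ε / 2 * r) hεr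
  refine ⟨M, fun i hi => ?_⟩
  have hb : ‖bseq a w i‖ * r ^ (i+1) ≤ ε / 2 * r := by
    refine bseq_norm_le hr ha hεr.le hw i fun n hn => ?_
    have := hM n (by omega)
    rw [Real.dist_eq, sub_zero] at this
    exact (le_abs_self _).trans this.le
  have hbb : ‖bseq a w i‖ * r ^ i ≤ ε / 2 := by
    have h2 : ‖bseq a w i‖ * r ^ i * r ≤ (ε / 2) * r := by
      calc ‖bseq a w i‖ * r ^ i * r = ‖bseq a w i‖ * r ^ (i+1) := by rw [pow_succ]; ring
        _ ≤ ε / 2 * r := hb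
    exact le_of_mul_le_mul_right h2 hr
  rw [Real.dist_eq, sub_zero, abs_of_nonneg (by positivity)]
  calc ‖bseq a w i‖ * r ^ i ≤ ε / 2 := hbb
    _ < ε := by linarith

lemma bseq_rec (hr : 0 < r) (ha : Tendsto (fun n => ‖a n‖ * r ^ n) atTop (nhds 0))
    {w : k} (hw : ‖w‖ ≤ r) (i : ℕ) :
    bseq a w i = a (i + 1) + w * bseq a w (i + 1) := by
  rw [bseq, Summable.tsum_eq_zero_add (bseq_summable hr ha hw i)]
  congr 1
  · simp
  · rw [bseq, ← tsum_mul_left]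
    exact tsum_congr fun j => by
      rw [show i + 1 + (j + 1) = i + 1 + 1 + j by ring]
      ring

lemma bseq_z_summable (hr : 0 < r) (ha : Tendsto (fun n => ‖a n‖ * r ^ n) atTop (nhds 0))
    {w z : k} (hw : ‖w‖ ≤ r) (hz : ‖z‖ ≤ r) :
    Summable (fun i => bseq a w i * z ^ i) := by
  refine summable_of_norm_le_tendsto (u := fun i => ‖bseq a w i‖ * r ^ i)
    (fun i => ?_) (bseq_decay hr ha hw)
  rw [norm_mul, norm_pow]
  exact mul_le_mul_of_nonneg_left (pow_le_pow_left₀ (norm_nonneg z) hz i) (norm_nonneg _)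

lemma factor_eq (hr : 0 < r) (ha : Tendsto (fun n => ‖a n‖ * r ^ n) atTop (nhds 0))
    {w z : k} (hw : ‖w‖ ≤ r) (hz : ‖z‖ ≤ r) :
    (∑' n, a n * z ^ n)
      = (∑' n, a n * w ^ n) + (z - w) * ∑' i, bseq a w i * z ^ i := by
  have Saz := summable_pow hr ha hz
  have Saw := summable_pow hr ha hw
  have Sb := bseq_z_summable hr ha hw hz
  have hv := bseq_decay hr ha hw
  have S1 : Summable (fun i => bseq a w i * z ^ (i+1)) := by
    refine summable_of_norm_le_tendsto (u := fun i => (‖bseq a w i‖ * r ^ i) * r)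
      (fun i => ?_) (by simpa using hv.mul_const r)
    show ‖bseq a w i * z ^ (i+1)‖ ≤ ‖bseq a w i‖ * r ^ i * r
    rw [norm_mul, norm_pow, mul_assoc, ← pow_succ]
    exact mul_le_mul_of_nonneg_left (pow_le_pow_left₀ (norm_nonneg z) hz (i+1)) (norm_nonneg _)
  have S2' : Summable (fun i => bseq a w (i+1) * z ^ (i+1)) := by
    have := (summable_nat_add_iff 1).mpr Sb
    simpa using this
  have S2 : Summable (fun i => w * (bseq a w (i+1) * z ^ (i+1))) := S2'.mul_left w
  have t1 : (∑' n, a n * z ^ n) = a 0 + ∑' i, a (i+1) * z ^ (i+1) := by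
    rw [Summable.tsum_eq_zero_add Saz]
    simp
  have t2 : ∀ i, a (i+1) * z ^ (i+1)
      = bseq a w i * z ^ (i+1) - w * (bseq a w (i+1) * z ^ (i+1)) := by
    intro i
    rw [bseq_rec hr ha hw i]
    ring
  have t3 : (∑' i, a (i+1) * z ^ (i+1))
      = (∑' i, bseq a w i * z ^ (i+1)) - ∑' i, w * (bseq a w (i+1) * z ^ (i+1)) := by
    rw [← Summable.tsum_sub S1 S2]
    exact tsum_congr t2
  have t4 : (∑' i, bseq a w i * z ^ (i+1)) = z * ∑' i, bseq a w i * z ^ i := by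
    rw [← tsum_mul_left]
    exact tsum_congr fun i => by ring
  have t5 : (∑' i, w * (bseq a w (i+1) * z ^ (i+1)))
      = w * ((∑' i, bseq a w i * z ^ i) - bseq a w 0) := by
    rw [tsum_mul_left]
    congr 1
    have h := Summable.tsum_eq_zero_add Sb
    simp only [pow_zero, mul_one] at h
    rw [h]
    ring
  have t6 : a 0 + w * bseq a w 0 = ∑' n, a n * w ^ n := by
    rw [Summable.tsum_eq_zero_add Saw]
    simp only [pow_zero, mul_one]
    congr 1
    rw [bseq, ← tsum_mul_left]
    exact tsum_congr fun j => by
      rw [show 0 + 1 + j = j + 1 by ring]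
      ring
  rw [t1, t3, t4, t5, ← t6]
  ring



end Series

section Series2
variable [CompleteSpace k] {a : ℕ → k}

lemma lipschitz_bound (hr : 0 < r) (ha : Tendsto (fun n => ‖a n‖ * r ^ n) atTop (nhds 0))
    {s : ℝ} (hub : ∀ n, ‖a n‖ * r ^ n ≤ s) {w z : k} (hw : ‖w‖ ≤ r) (hz : ‖z‖ ≤ r) :
    ‖(∑' n, a n * z ^ n) - ∑' n, a n * w ^ n‖ ≤ s / r * ‖z - w‖ := by
  have hs0 : (0:ℝ) ≤ s := le_trans (by positivity) (hub 0)
  rw [factor_eq hr ha hw hz, add_sub_cancel_left, norm_mul]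
  have hg : ‖∑' i, bseq a w i * z ^ i‖ ≤ s / r := by
    refine IsUltrametricDist.norm_tsum_le_of_forall_le_of_nonneg (by positivity) fun i => ?_
    have h1 : ‖bseq a w i * z ^ i‖ ≤ ‖bseq a w i‖ * r ^ i := by
      rw [norm_mul, norm_pow]
      exact mul_le_mul_of_nonneg_left (pow_le_pow_left₀ (norm_nonneg z) hz i) (norm_nonneg _)
    refine h1.trans ?_
    rw [le_div_iff₀ hr]
    calc ‖bseq a w i‖ * r ^ i * r = ‖bseq a w i‖ * r ^ (i+1) := by rw [pow_succ]; ring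
      _ ≤ s := bseq_norm_le hr ha hs0 hw i fun n _ => hub n
  calc ‖z - w‖ * ‖∑' i, bseq a w i * z ^ i‖ ≤ ‖z - w‖ * (s / r) :=
        mul_le_mul_of_nonneg_left hg (norm_nonneg _)
    _ = s / r * ‖z - w‖ := by ring

lemma tail_bound (hr : 0 < r) (ha : Tendsto (fun n => ‖a n‖ * r ^ n) atTop (nhds 0))
    {z : k} (hz : ‖z‖ ≤ r) (m : ℕ) {C : ℝ} (hC : 0 ≤ C)
    (h : ∀ n, m + 1 ≤ n → ‖a n‖ * r ^ n ≤ C) :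
    ‖(∑' n, a n * z ^ n) - (trunc a m).eval z‖ ≤ C := by
  have Saz := summable_pow hr ha hz
  have hsum := Summable.sum_add_tsum_nat_add (f := fun n => a n * z ^ n) (m+1) Saz
  rw [trunc_eval]
  have heq : (∑' n, a n * z ^ n) - ∑ n ∈ Finset.range (m+1), a n * z ^ n
      = ∑' i, a (i+(m+1)) * z ^ (i+(m+1)) := by rw [← hsum]; ring
  rw [heq]
  refine IsUltrametricDist.norm_tsum_le_of_forall_le_of_nonneg hC fun i => ?_
  calc ‖a (i+(m+1)) * z ^ (i+(m+1))‖ ≤ ‖a (i+(m+1))‖ * r ^ (i+(m+1)) := by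
        rw [norm_mul, norm_pow]
        exact mul_le_mul_of_nonneg_left (pow_le_pow_left₀ (norm_nonneg z) hz _) (norm_nonneg _)
    _ ≤ C := h _ (by omega)

lemma cauchySeq_of_tendsto_sub (x : ℕ → k)
    (h : Tendsto (fun i => ‖x (i+1) - x i‖) atTop (nhds 0)) : CauchySeq x := by
  rw [Metric.cauchySeq_iff']
  intro ε hε
  obtain ⟨I, hI⟩ := (Metric.tendsto_atTop.mp h) ε hε
  refine ⟨I, fun n hn => ?_⟩
  induction n, hn using Nat.le_induction with
  | base => simpa using hε
  | succ n hn ih =>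
    have h1 : dist (x (n+1)) (x n) < ε := by
      have := hI n hn
      rw [Real.dist_eq, sub_zero, abs_of_nonneg (norm_nonneg _)] at this
      rw [dist_eq_norm]
      exact this
    calc dist (x (n+1)) (x I) ≤ max (dist (x (n+1)) (x n)) (dist (x n) (x I)) :=
          IsUltrametricDist.dist_triangle_max _ _ _
      _ < ε := max_lt h1 ih

lemma exists_root [IsAlgClosed k] (hr : 0 < r) {N : ℕ}
    (ha : Tendsto (fun n => ‖a n‖ * r ^ n) atTop (nhds 0)) (haN : a N ≠ 0) (hN1 : 1 ≤ N)
    (hub : ∀ n, ‖a n‖ * r ^ n ≤ ‖a N‖ * r ^ N)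
    (hstrict : ∀ n, N < n → ‖a n‖ * r ^ n < ‖a N‖ * r ^ N) :
    ∃ z0 : k, ‖z0‖ ≤ r ∧ (∑' n, a n * z0 ^ n) = 0 := by
  classical
  have haNpos : (0:ℝ) < ‖a N‖ := norm_pos_iff.mpr haN
  have hstep : ∀ (i : ℕ) (z : k), ‖z‖ ≤ r → ∃ w, (‖w‖ ≤ r ∧ (trunc a (N + i)).IsRoot w) ∧
      ‖z - w‖ ^ N * ‖a N‖ ≤ ‖(trunc a (N + i)).eval z‖ := by
    intro i z hz
    obtain ⟨w, h1, h2, h3⟩ := root_step hr haN hN1 hub hstrict (m := N + i) (by omega) z hz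
    exact ⟨w, ⟨h1, h2⟩, h3⟩
  let F : ∀ i : ℕ, {z : k // ‖z‖ ≤ r ∧ (trunc a (N + i)).IsRoot z} := fun i =>
    Nat.rec
      ⟨(hstep 0 0 (by simp [hr.le])).choose, (hstep 0 0 (by simp [hr.le])).choose_spec.1⟩
      (fun i prev =>
        ⟨(hstep (i+1) prev.1 prev.2.1).choose, (hstep (i+1) prev.1 prev.2.1).choose_spec.1⟩) i
  set x : ℕ → k := fun i => (F i).1 with hx
  have hxr : ∀ i, ‖x i‖ ≤ r := fun i => (F i).2.1
  have hxroot : ∀ i, (trunc a (N + i)).IsRoot (x i) := fun i => (F i).2.2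
  have hxd : ∀ i, ‖x i - x (i+1)‖ ^ N * ‖a N‖ ≤ ‖(trunc a (N + (i+1))).eval (x i)‖ :=
    fun i => (hstep (i+1) (x i) (hxr i)).choose_spec.2
  have heval : ∀ i, ‖(trunc a (N + (i+1))).eval (x i)‖ ≤ ‖a (N+i+1)‖ * r ^ (N+i+1) := by
    intro i
    have hroot := hxroot i
    rw [Polynomial.IsRoot, trunc_eval] at hroot
    have : (trunc a (N + (i+1))).eval (x i) = a (N+i+1) * (x i) ^ (N+i+1) := by
      have e1 : (trunc a (N + (i+1))).eval (x i)
          = ∑ n ∈ Finset.range (N+i+1), a n * x i ^ n + a (N+i+1) * x i ^ (N+i+1) := by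
        rw [show N + (i+1) = (N+i)+1 by ring, trunc_eval, Finset.sum_range_succ]
      rw [e1, hroot, zero_add]
    rw [this, norm_mul, norm_pow]
    exact mul_le_mul_of_nonneg_left (pow_le_pow_left₀ (norm_nonneg _) (hxr i) _) (norm_nonneg _)
  have hd : ∀ i, ‖x i - x (i+1)‖ ^ N * ‖a N‖ ≤ ‖a (N+i+1)‖ * r ^ (N+i+1) :=
    fun i => (hxd i).trans (heval i)
  have hdist0 : Tendsto (fun i => ‖x (i+1) - x i‖) atTop (nhds 0) := by
    rw [Metric.tendsto_atTop]
    intro ε hε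
    have hεN : (0:ℝ) < ε ^ N * ‖a N‖ := by positivity
    obtain ⟨M, hM⟩ := (Metric.tendsto_atTop.mp ha) (ε ^ N * ‖a N‖) hεN
    refine ⟨M, fun i hi => ?_⟩
    have hu : ‖a (N+i+1)‖ * r ^ (N+i+1) < ε ^ N * ‖a N‖ := by
      have := hM (N+i+1) (by omega)
      rw [Real.dist_eq, sub_zero] at this
      exact (le_abs_self _).trans_lt this
    have hlt : ‖x i - x (i+1)‖ ^ N * ‖a N‖ < ε ^ N * ‖a N‖ := (hd i).trans_lt hu
    have hpow : ‖x i - x (i+1)‖ ^ N < ε ^ N := lt_of_mul_lt_mul_right hlt haNpos.le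
    have : ‖x i - x (i+1)‖ < ε := by
      by_contra hcon
      push_neg at hcon
      exact absurd hpow (not_lt.mpr (pow_le_pow_left₀ hε.le hcon N))
    rw [Real.dist_eq, sub_zero, abs_of_nonneg (norm_nonneg _), norm_sub_rev]
    exact this
  obtain ⟨z0, hlim⟩ := cauchySeq_tendsto_of_complete (cauchySeq_of_tendsto_sub x hdist0)
  have hz0r : ‖z0‖ ≤ r := le_of_tendsto hlim.norm (Eventually.of_forall hxr)
  have hfx : Tendsto (fun i => ∑' n, a n * (x i) ^ n) atTop (nhds 0) := by
    rw [tendsto_zero_iff_norm_tendsto_zero, Metric.tendsto_atTop]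
    intro ε hε
    obtain ⟨M, hM⟩ := (Metric.tendsto_atTop.mp ha) (ε/2) (by positivity)
    refine ⟨M, fun i hi => ?_⟩
    have hb : ‖(∑' n, a n * (x i) ^ n) - (trunc a (N+i)).eval (x i)‖ ≤ ε/2 := by
      refine tail_bound hr ha (hxr i) (N+i) (by positivity) fun n hn => ?_
      have := hM n (by omega)
      rw [Real.dist_eq, sub_zero] at this
      exact (le_abs_self _).trans this.le
    have hroot := hxroot i
    rw [Polynomial.IsRoot] at hroot
    rw [hroot, sub_zero] at hb
    rw [Real.dist_eq, sub_zero, abs_of_nonneg (norm_nonneg _)]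
    linarith
  have hfz : Tendsto (fun i => ∑' n, a n * (x i) ^ n) atTop (nhds (∑' n, a n * z0 ^ n)) := by
    rw [tendsto_iff_norm_sub_tendsto_zero]
    refine squeeze_zero (fun i => norm_nonneg _)
      (fun i => lipschitz_bound hr ha hub hz0r (hxr i)) ?_
    have h1 : Tendsto (fun i => ‖x i - z0‖) atTop (nhds 0) :=
      tendsto_iff_norm_sub_tendsto_zero.mp hlim
    have := h1.const_mul ((‖a N‖ * r ^ N) / r)
    simpa using this
  exact ⟨z0, hz0r, tendsto_nhds_unique hfz hfx⟩

end Series2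

lemma tail_lt {u : ℕ → ℝ} (hu : Tendsto u atTop (nhds 0)) {B : ℝ} (hB : 0 < B) (N : ℕ)
    (h : ∀ n, N < n → u n < B) : ∃ B', 0 ≤ B' ∧ B' < B ∧ ∀ n, N < n → u n ≤ B' := by
  classical
  obtain ⟨M, hM⟩ := (Metric.tendsto_atTop.mp hu) (B/2) (by positivity)
  have habs : ∀ n, M ≤ n → u n ≤ B / 2 := by
    intro n hn
    have := hM n hn
    rw [Real.dist_eq, sub_zero] at this
    exact (le_abs_self _).trans this.le
  set T : Finset ℝ := insert (B/2) ((Finset.Ioc N M).image u) with hT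
  have hTne : T.Nonempty := Finset.insert_nonempty _ _
  have hmem : B/2 ∈ T := Finset.mem_insert_self _ _
  refine ⟨T.max' hTne, le_trans (by positivity) (Finset.le_max' T _ hmem), ?_, ?_⟩
  · rw [Finset.max'_lt_iff]
    intro x hx
    rcases Finset.mem_insert.mp hx with rfl | hx
    · linarith
    · obtain ⟨n, hn, rfl⟩ := Finset.mem_image.mp hx
      exact h n (Finset.mem_Ioc.mp hn).1
  · intro n hn
    by_cases hnM : n ≤ M
    · exact Finset.le_max' T _ (Finset.mem_insert_of_mem
        (Finset.mem_image_of_mem u (Finset.mem_Ioc.mpr ⟨hn, hnM⟩)))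
    · exact (habs n (by omega)).trans (Finset.le_max' T _ hmem)

section Main
variable [CompleteSpace k] [IsAlgClosed k]

theorem main_aux (hr : 0 < r) : ∀ N : ℕ, ∀ a : ℕ → k,
    Tendsto (fun n => ‖a n‖ * r ^ n) atTop (nhds 0) →
    a N ≠ 0 →
    (∀ n, ‖a n‖ * r ^ n ≤ ‖a N‖ * r ^ N) →
    (∀ n, N < n → ‖a n‖ * r ^ n < ‖a N‖ * r ^ N) →
    ∃ (P : Polynomial k) (b : ℕ → k), P.Monic ∧ P.natDegree = N ∧
      (∀ z : k, P.IsRoot z → ‖z‖ ≤ r) ∧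
      Tendsto (fun n => ‖b n‖ * r ^ n) atTop (nhds 0) ∧
      (∀ z : k, ‖z‖ ≤ r → ∑' n, b n * z ^ n ≠ 0) ∧
      (∀ z : k, ‖z‖ ≤ r → ∑' n, a n * z ^ n = P.eval z * ∑' n, b n * z ^ n) := by
  intro N
  induction N with
  | zero =>
    intro a ha haN hub hstrict
    have ha0 : (0:ℝ) < ‖a 0‖ := norm_pos_iff.mpr haN
    obtain ⟨B', hB'0, hB'lt, hB'le⟩ := tail_lt ha (B := ‖a 0‖ * r ^ 0) (by positivity) 0 hstrict
    rw [pow_zero, mul_one] at hB'lt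
    have hnv : ∀ z : k, ‖z‖ ≤ r → (∑' n, a n * z ^ n) ≠ 0 := by
      intro z hz
      have hS := summable_pow hr ha hz
      have ht : ‖∑' i, a (i+1) * z ^ (i+1)‖ ≤ B' := by
        refine IsUltrametricDist.norm_tsum_le_of_forall_le_of_nonneg hB'0 fun i => ?_
        calc ‖a (i+1) * z ^ (i+1)‖ ≤ ‖a (i+1)‖ * r ^ (i+1) := by
              rw [norm_mul, norm_pow]
              exact mul_le_mul_of_nonneg_left (pow_le_pow_left₀ (norm_nonneg z) hz _)
                (norm_nonneg _)
          _ ≤ B' := hB'le (i+1) (by omega)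
      have heq : (∑' n, a n * z ^ n) = a 0 + ∑' i, a (i+1) * z ^ (i+1) := by
        rw [Summable.tsum_eq_zero_add hS]
        simp
      have : ‖∑' n, a n * z ^ n‖ = ‖a 0‖ := by
        rw [heq]
        exact norm_add_eq_left (lt_of_le_of_lt ht hB'lt)
      intro h0
      rw [h0, norm_zero] at this
      exact absurd this.symm (ne_of_gt ha0)
    refine ⟨1, a, monic_one, natDegree_one, ?_, ha, hnv, ?_⟩
    · intro z hz
      exact absurd hz (by simp [Polynomial.IsRoot])
    · intro z hz
      simp
  | succ N ih =>
    intro a ha haN hub hstrict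
    have haNpos : (0:ℝ) < ‖a (N+1)‖ := norm_pos_iff.mpr haN
    obtain ⟨z0, hz0r, hz0root⟩ :=
      exists_root hr ha haN (by omega) hub hstrict
    set b : ℕ → k := bseq a z0 with hb
    have hbdecay : Tendsto (fun n => ‖b n‖ * r ^ n) atTop (nhds 0) := bseq_decay hr ha hz0r
    obtain ⟨B', hB'0, hB'lt, hB'le⟩ :=
      tail_lt ha (B := ‖a (N+1)‖ * r ^ (N+1)) (by positivity) (N+1) hstrict
    -- norm of b N
    have hbN : ‖b N‖ = ‖a (N+1)‖ := by
      have hrec := bseq_rec hr ha hz0r N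
      have h1 : ‖bseq a z0 (N+1)‖ * r ^ (N+2) ≤ B' :=
        bseq_norm_le hr ha hB'0 hz0r (N+1) (fun n hn => hB'le n (by omega))
      have h2 : ‖z0 * bseq a z0 (N+1)‖ * r ^ (N+1) ≤ B' := by
        calc ‖z0 * bseq a z0 (N+1)‖ * r ^ (N+1)
            = ‖z0‖ * ‖bseq a z0 (N+1)‖ * r ^ (N+1) := by rw [norm_mul]
          _ ≤ r * ‖bseq a z0 (N+1)‖ * r ^ (N+1) :=
              mul_le_mul_of_nonneg_right
                (mul_le_mul_of_nonneg_right hz0r (norm_nonneg _)) (pow_pos hr (N+1)).le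
          _ = ‖bseq a z0 (N+1)‖ * r ^ (N+2) := by rw [pow_succ]; ring
          _ ≤ B' := h1
      have h3 : ‖z0 * bseq a z0 (N+1)‖ * r ^ (N+1) < ‖a (N+1)‖ * r ^ (N+1) :=
        h2.trans_lt hB'lt
      have h4 : ‖z0 * bseq a z0 (N+1)‖ < ‖a (N+1)‖ :=
        lt_of_mul_lt_mul_right h3 (pow_pos hr (N+1)).le
      rw [hb, hrec]
      exact norm_add_eq_left h4
    have hbNne : b N ≠ 0 := by
      intro h0
      rw [h0, norm_zero] at hbN
      exact absurd hbN.symm (ne_of_gt haNpos)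
    have hbub : ∀ n, ‖b n‖ * r ^ n ≤ ‖b N‖ * r ^ N := by
      intro n
      have h1 : ‖b n‖ * r ^ (n+1) ≤ ‖a (N+1)‖ * r ^ (N+1) :=
        bseq_norm_le hr ha (by positivity) hz0r n (fun m hm => hub m)
      have h2 : ‖b N‖ * r ^ N * r = ‖a (N+1)‖ * r ^ (N+1) := by
        rw [hbN, pow_succ]; ring
      have h3 : ‖b n‖ * r ^ n * r ≤ ‖b N‖ * r ^ N * r := by
        rw [h2]
        calc ‖b n‖ * r ^ n * r = ‖b n‖ * r ^ (n+1) := by rw [pow_succ]; ring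
          _ ≤ _ := h1
      exact le_of_mul_le_mul_right h3 hr
    have hbstrict : ∀ n, N < n → ‖b n‖ * r ^ n < ‖b N‖ * r ^ N := by
      intro n hn
      have h1 : ‖b n‖ * r ^ (n+1) ≤ B' :=
        bseq_norm_le hr ha hB'0 hz0r n (fun m hm => hB'le m (by omega))
      have h2 : ‖b N‖ * r ^ N * r = ‖a (N+1)‖ * r ^ (N+1) := by
        rw [hbN, pow_succ]; ring
      have h3 : ‖b n‖ * r ^ n * r < ‖b N‖ * r ^ N * r := by
        rw [h2]
        calc ‖b n‖ * r ^ n * r = ‖b n‖ * r ^ (n+1) := by rw [pow_succ]; ring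
          _ ≤ B' := h1
          _ < _ := hB'lt
      exact lt_of_mul_lt_mul_right h3 hr.le
    obtain ⟨P', b', hP'mon, hP'deg, hP'roots, hb'decay, hb'nv, hb'fac⟩ :=
      ih b hbdecay hbNne hbub hbstrict
    refine ⟨P' * (X - C z0), b', hP'mon.mul (monic_X_sub_C z0), ?_, ?_, hb'decay, hb'nv, ?_⟩
    · rw [Polynomial.natDegree_mul hP'mon.ne_zero (Polynomial.X_sub_C_ne_zero z0),
        hP'deg, Polynomial.natDegree_X_sub_C]
    · intro z hz
      rw [Polynomial.IsRoot, Polynomial.eval_mul] at hz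
      rcases mul_eq_zero.mp hz with h0 | h0
      · exact hP'roots z h0
      · rw [Polynomial.eval_sub, Polynomial.eval_X, Polynomial.eval_C, sub_eq_zero] at h0
        rw [h0]
        exact hz0r
    · intro z hz
      have hf := factor_eq hr ha hz0r hz
      rw [hz0root, zero_add] at hf
      rw [hf, hb'fac z hz, Polynomial.eval_mul, Polynomial.eval_sub, Polynomial.eval_X,
        Polynomial.eval_C]
      ring

end Main

end NewtonZeros

/-- Newton polygon zero counting: for a power series convergent on the closed disc of
radius `r ∈ |k*|`, not identically zero, the number of zeros in the disc counted with
multiplicity is finite and equals the largest index `N` with `‖a_N‖ r^N = sup_n ‖aₙ‖ rⁿ`.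
This is expressed by factoring `f = P · u` with `P` a monic polynomial of degree `N`
all of whose roots lie in the disc and `u` a convergent power series with no zeros
in the disc. -/
theorem number_of_zeros
    (k : Type*) [NontriviallyNormedField k] [IsAlgClosed k] [CompleteSpace k]
    [IsUltrametricDist k]
    (a : ℕ → k) (c : k) (hc : c ≠ 0) (r : ℝ) (hr : r = ‖c‖)
    (hdecay : Tendsto (fun n => ‖a n‖ * r ^ n) atTop (nhds 0))
    (hne : ∃ n, a n ≠ 0)
    (N : ℕ) (hN : ‖a N‖ * r ^ N = ⨆ n : ℕ, ‖a n‖ * r ^ n)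
    (hNmax : ∀ n : ℕ, N < n → ‖a n‖ * r ^ n < ⨆ m : ℕ, ‖a m‖ * r ^ m) :
    {z : k | ‖z‖ ≤ r ∧ ∑' n : ℕ, a n * z ^ n = 0}.Finite ∧
    ∃ (P : Polynomial k) (b : ℕ → k),
      P.Monic ∧ P.natDegree = N ∧ (∀ z : k, P.IsRoot z → ‖z‖ ≤ r) ∧
      Tendsto (fun n => ‖b n‖ * r ^ n) atTop (nhds 0) ∧
      (∀ z : k, ‖z‖ ≤ r → ∑' n : ℕ, b n * z ^ n ≠ 0) ∧
      (∀ z : k, ‖z‖ ≤ r →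
        ∑' n : ℕ, a n * z ^ n = P.eval z * ∑' n : ℕ, b n * z ^ n) := by
  classical
  have hr0 : 0 < r := by rw [hr]; exact norm_pos_iff.mpr hc
  have bdd : BddAbove (Set.range fun n => ‖a n‖ * r ^ n) := hdecay.bddAbove_range
  have hub : ∀ n, ‖a n‖ * r ^ n ≤ ‖a N‖ * r ^ N := by
    intro n; rw [hN]; exact le_ciSup bdd n
  have haN : a N ≠ 0 := by
    obtain ⟨n0, hn0⟩ := hne
    have h1 : 0 < ‖a n0‖ * r ^ n0 := by
      have := norm_pos_iff.mpr hn0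
      positivity
    have h2 := h1.trans_le (hub n0)
    intro h0
    rw [h0, norm_zero, zero_mul] at h2
    exact lt_irrefl 0 h2
  have hstrict : ∀ n, N < n → ‖a n‖ * r ^ n < ‖a N‖ * r ^ N := by
    intro n hn; rw [hN]; exact hNmax n hn
  obtain ⟨P, b, hmon, hdeg, hroots, hbdecay, hnv, hfac⟩ :=
    NewtonZeros.main_aux hr0 N a hdecay haN hub hstrict
  refine ⟨?_, P, b, hmon, hdeg, hroots, hbdecay, hnv, hfac⟩
  have hsub : {z : k | ‖z‖ ≤ r ∧ ∑' n : ℕ, a n * z ^ n = 0} ⊆ ↑P.roots.toFinset := by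
    intro z hzmem
    obtain ⟨hzr, hz0⟩ := hzmem
    have h1 := hfac z hzr
    rw [hz0] at h1
    have h2 : P.eval z = 0 := by
      rcases mul_eq_zero.mp h1.symm with h | h
      · exact h
      · exact absurd h (hnv z hzr)
    have hz : z ∈ P.roots.toFinset := by
      rw [Multiset.mem_toFinset, Polynomial.mem_roots']
      exact ⟨hmon.ne_zero, h2⟩
    exact Finset.mem_coe.mpr hz
  exact (P.roots.toFinset.finite_toSet).subset hsub
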